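/- The optimal distortion–privacy trade-off function T(D̄) = D̄·(−ρ/r + √((1−ρ²/r)(v/D̄ − 1/r)))² is nondecreasing on the interval [v(r−ρ²), v·r], with T(v(r−ρ²)) = 0 and T(v·r) = v·ρ²/r. -/

import Mathlib

/-- The optimal distortion–privacy trade-off curve
`T(D̄) = D̄·(−ρ/r + √((1−ρ²/r)(v/D̄ − 1/r)))²` of the paper's Theorem 2. -/
noncomputable def T (v ρ r D : ℝ) : ℝ :=
  D * (-ρ / r + Real.sqrt ((1 - ρ ^ 2 / r) * (v / D - 1 / r))) ^ 2

/-- The trade-off function `T` is nondecreasing on `[v(r−ρ²), vr]`, with value `0` at the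
minimum-privacy endpoint and `vρ²/r` at the maximum-privacy endpoint. -/
theorem tradeoff_monotone (v ρ r : ℝ) (hv : 0 < v) (hρ : 0 < ρ) (hr : ρ ^ 2 < r) :
    MonotoneOn (fun D => T v ρ r D) (Set.Icc (v * (r - ρ ^ 2)) (v * r)) ∧
    T v ρ r (v * (r - ρ ^ 2)) = 0 ∧
    T v ρ r (v * r) = v * ρ ^ 2 / r := by
  have hρ2 : 0 < ρ ^ 2 := pow_pos hρ 2
  have hr0 : 0 < r := hρ2.trans hr
  have hsub : 0 < r - ρ ^ 2 := sub_pos.mpr hr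
  have hc : 0 < 1 - ρ ^ 2 / r := sub_pos.mpr ((div_lt_one hr0).mpr hr)
  have hlo : 0 < v * (r - ρ ^ 2) := mul_pos hv hsub
  have key : ∀ D ∈ Set.Icc (v * (r - ρ ^ 2)) (v * r),
      Real.sqrt ((1 - ρ ^ 2 / r) * (v / D - 1 / r)) ≤ ρ / r := by
    intro D hD
    have hD0 : 0 < D := hlo.trans_le hD.1
    have h1 : v / D ≤ 1 / (r - ρ ^ 2) := by
      rw [div_le_div_iff₀ hD0 hsub]
      nlinarith [hD.1]
    have heq : (1 - ρ ^ 2 / r) * (1 / (r - ρ ^ 2) - 1 / r) = (ρ / r) ^ 2 := by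
      field_simp
      ring
    have h2 : (1 - ρ ^ 2 / r) * (v / D - 1 / r) ≤ (ρ / r) ^ 2 := by
      nlinarith [h1, hc]
    calc Real.sqrt ((1 - ρ ^ 2 / r) * (v / D - 1 / r))
        ≤ Real.sqrt ((ρ / r) ^ 2) := Real.sqrt_le_sqrt h2
      _ = ρ / r := Real.sqrt_sq (by positivity)
  refine ⟨?_, ?_, ?_⟩
  · intro D₁ hD₁ D₂ hD₂ h12
    have hD10 : 0 < D₁ := hlo.trans_le hD₁.1
    have hD20 : 0 < D₂ := hlo.trans_le hD₂.1
    set s₁ := (1 - ρ ^ 2 / r) * (v / D₁ - 1 / r) with hs₁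
    set s₂ := (1 - ρ ^ 2 / r) * (v / D₂ - 1 / r) with hs₂
    have hsle : s₂ ≤ s₁ := by
      have : v / D₂ ≤ v / D₁ := div_le_div_of_nonneg_left hv.le hD10 h12
      nlinarith [hc]
    have hsq : Real.sqrt s₂ ≤ Real.sqrt s₁ := Real.sqrt_le_sqrt hsle
    have hb1 : Real.sqrt s₁ ≤ ρ / r := key D₁ hD₁
    have hb2 : Real.sqrt s₂ ≤ ρ / r := key D₂ hD₂
    simp only [T]
    have e1 : (-ρ / r + Real.sqrt s₁) ^ 2 = (ρ / r - Real.sqrt s₁) ^ 2 := by ring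
    have e2 : (-ρ / r + Real.sqrt s₂) ^ 2 = (ρ / r - Real.sqrt s₂) ^ 2 := by ring
    rw [e1, e2]
    have hpow : (ρ / r - Real.sqrt s₁) ^ 2 ≤ (ρ / r - Real.sqrt s₂) ^ 2 := by
      have h1' : 0 ≤ ρ / r - Real.sqrt s₁ := sub_nonneg.mpr hb1
      have : ρ / r - Real.sqrt s₁ ≤ ρ / r - Real.sqrt s₂ := by linarith
      exact pow_le_pow_left₀ h1' this 2
    exact mul_le_mul h12 hpow (sq_nonneg _) hD20.le
  · have hs : (1 - ρ ^ 2 / r) * (v / (v * (r - ρ ^ 2)) - 1 / r) = (ρ / r) ^ 2 := by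
      field_simp
      ring
    simp only [T, hs, Real.sqrt_sq (by positivity : (0:ℝ) ≤ ρ / r)]
    ring
  · have hs : v / (v * r) - 1 / r = 0 := by
      field_simp
      ring
    simp only [T, hs, mul_zero, Real.sqrt_zero, add_zero]
    field_simp
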